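/- Let C : ℤ^d × ℤ^d → [0,∞) satisfy (A1) and (A2). Then there exists c > 0, depending only on κ₁, d and α, such that for every ρ ≥ 1, every λ ≥ 1, every unit vector v ∈ ℝ^d, every sign σ ∈ {+1,−1} and every ξ ∈ ρ^{-1}ℤ^d: Σ_{ζ ∈ ρ^{-1}ℤ^d, 0<|ξ−ζ|≤λ} (exp(σ⟨v, ζ−ξ⟩) − 1)² C^ρ(ξ,ζ) ρ^{−d} ≤ c·λ^{4−α}·e^{2λ}. -/

import Mathlib

open scoped ENNReal

/-- Euclidean norm of a point of `ℤ^d`. -/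
noncomputable def zNorm (d : ℕ) (v : Fin d → ℤ) : ℝ := Real.sqrt (∑ i, ((v i : ℝ))^2)

/-- The point of the scaled lattice `ρ⁻¹ℤ^d` with integer coordinates `z`. -/
noncomputable def latt (d : ℕ) (ρ : ℝ) (z : Fin d → ℤ) : EuclideanSpace ℝ (Fin d) :=
  WithLp.toLp 2 (fun i => (z i : ℝ) / ρ)

lemma zNorm_nonneg (d : ℕ) (v : Fin d → ℤ) : 0 ≤ zNorm d v := Real.sqrt_nonneg _

lemma coord_le_zNorm (d : ℕ) (v : Fin d → ℤ) (i : Fin d) : |(v i : ℝ)| ≤ zNorm d v := by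
  rw [← Real.sqrt_sq_eq_abs]
  exact Real.sqrt_le_sqrt (Finset.single_le_sum (f := fun j => ((v j:ℝ))^2)
    (fun j _ => sq_nonneg _) (Finset.mem_univ i))

lemma zNorm_le (d : ℕ) (v : Fin d → ℤ) (m : ℝ) (hm : 0 ≤ m) (h : ∀ i, |(v i : ℝ)| ≤ m) :
    zNorm d v ≤ Real.sqrt d * m := by
  have : zNorm d v ≤ Real.sqrt (∑ _i : Fin d, m^2) := by
    apply Real.sqrt_le_sqrt
    exact Finset.sum_le_sum fun i _ => by
      rw [← sq_abs]; exact pow_le_pow_left₀ (abs_nonneg _) (h i) 2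
  simpa [Real.sqrt_mul (by positivity : (0:ℝ) ≤ (d:ℝ)), Real.sqrt_sq hm] using this

lemma zNorm_pos_ne {d : ℕ} {x y : Fin d → ℤ} (h : 0 < zNorm d (x - y)) : x ≠ y := by
  rintro rfl; simp [zNorm] at h

lemma zNorm_sub_comm (d : ℕ) (x y : Fin d → ℤ) : zNorm d (x - y) = zNorm d (y - x) := by
  unfold zNorm; congr 1; apply Finset.sum_congr rfl; intro i _
  have : ((x - y) i : ℝ) = -((y - x) i : ℝ) := by push_cast [Pi.sub_apply]; ring
  rw [this, neg_sq]

lemma abs_exp_sub_one_le {t : ℝ} : |Real.exp t - 1| ≤ |t| * Real.exp |t| := by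
  rcases le_or_gt 0 t with ht | ht
  · rw [abs_of_nonneg (by simpa using Real.one_le_exp ht : (0:ℝ) ≤ Real.exp t - 1),
      abs_of_nonneg ht]
    have h := Real.add_one_le_exp (-t)
    have hp : 0 < Real.exp t := Real.exp_pos t
    have h2 : (1 - t) * Real.exp t ≤ 1 := by
      have := mul_le_mul_of_nonneg_right h hp.le
      rw [← Real.exp_add, neg_add_cancel, Real.exp_zero] at this
      linarith [this]
    nlinarith [h2, hp]
  · rw [abs_of_nonpos (by simpa using Real.exp_le_one_iff.mpr ht.le : Real.exp t - 1 ≤ 0),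
      abs_of_neg ht]
    have h := Real.add_one_le_exp t
    have := Real.one_le_exp (by linarith : (0:ℝ) ≤ -t)
    nlinarith

lemma exp_sub_one_sq_le {t b : ℝ} (ht : |t| ≤ b) :
    (Real.exp t - 1)^2 ≤ b^2 * Real.exp (2*b) := by
  have hb : 0 ≤ b := le_trans (abs_nonneg t) ht
  have h1 : |Real.exp t - 1| ≤ b * Real.exp b := by
    refine abs_exp_sub_one_le.trans ?_
    exact mul_le_mul ht (Real.exp_le_exp.mpr ht) (Real.exp_pos _).le hb
  calc (Real.exp t - 1)^2 = |Real.exp t - 1|^2 := (sq_abs _).symm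
    _ ≤ (b * Real.exp b)^2 := pow_le_pow_left₀ (abs_nonneg _) h1 2
    _ = b^2 * Real.exp (2*b) := by rw [mul_pow, ← Real.exp_nat_mul]; norm_num [mul_comm]

open Finset

/-- Box of sup-norm ≤ m. -/
noncomputable def ibox (d : ℕ) (m : ℕ) : Finset (Fin d → ℤ) :=
  Fintype.piFinset fun _ => Finset.Icc (-(m:ℤ)) m

lemma mem_ibox {d m : ℕ} {z : Fin d → ℤ} : z ∈ ibox d m ↔ ∀ i, |z i| ≤ (m:ℤ) := by
  simp [ibox, Fintype.mem_piFinset, abs_le]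

lemma ibox_mono {d : ℕ} {m m' : ℕ} (h : m ≤ m') : ibox d m ⊆ ibox d m' := by
  intro z hz
  rw [mem_ibox] at hz ⊢
  exact fun i => le_trans (hz i) (by exact_mod_cast h)

lemma card_ibox (d m : ℕ) : (ibox d m).card = (2*m+1)^d := by
  simp [ibox, Fintype.card_piFinset, Int.card_Icc]
  congr 1
  omega

lemma pow_le_pow_add_aux {a b : ℕ} (hb : b ≤ a) (ha : 1 ≤ a) (n : ℕ) :
    a^n ≤ b^n + n * (a - b) * a^(n-1) := by
  induction n with
  | zero => simp
  | succ n ih =>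
    have h1 : a^(n+1) = a^n * a := pow_succ a n
    have h2 : a^n * a ≤ (b^n + n*(a-b)*a^(n-1)) * a :=
      Nat.mul_le_mul_right a ih
    have h3 : n*(a-b)*(a^(n-1)*a) ≤ n*(a-b)*a^n := by
      cases n with
      | zero => simp
      | succ k => simp [← pow_succ]
    have h4 : b^n * a ≤ b^(n+1) + (a-b) * a^n := by
      calc b^n * a = b^n * b + b^n * (a-b) := by
            have h : b + (a - b) = a := by omega
            conv_lhs => rw [← h]
            rw [Nat.mul_add]
        _ ≤ b^(n+1) + (a-b) * a^n := by
            have : b^n ≤ a^n := Nat.pow_le_pow_left hb n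
            rw [pow_succ]
            nlinarith
    calc a^(n+1) = a^n * a := h1
      _ ≤ (b^n + n*(a-b)*a^(n-1)) * a := h2
      _ = b^n * a + n*(a-b)*(a^(n-1)*a) := by ring
      _ ≤ (b^(n+1) + (a-b)*a^n) + n*(a-b)*a^n := by omega
      _ ≤ b^(n+1) + (n+1)*(a-b)*a^((n+1)-1) := by
          simp only [Nat.add_sub_cancel]
          nlinarith

lemma telescope_term {α : ℝ} (hα1 : 0 < α) (hα2 : α < 2) (k : ℕ) :
    ((k:ℝ)+1)^(1-α) ≤ (max 1 (2-α)⁻¹) * (((k:ℝ)+1)^(2-α) - ((k:ℝ))^(2-α)) := by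
  set m : ℝ := (k:ℝ) + 1 with hm_def
  have hx : (0:ℝ) ≤ (k:ℝ) := Nat.cast_nonneg k
  have hm1 : 1 ≤ m := by rw [hm_def]; linarith
  have hm0 : 0 < m := by linarith
  have hxm : (k:ℝ) = m - 1 := by ring
  have hc1 : (1:ℝ) ≤ max 1 (2-α)⁻¹ := le_max_left _ _
  rcases le_or_gt α 1 with hle | hgt
  · -- 2-α ≥ 1
    have h1 : (k:ℝ)^(2-α) ≤ (k:ℝ) * m^(1-α) := by
      rcases eq_or_lt_of_le hx with h0 | h0
      · rw [← h0, Real.zero_rpow (by linarith)]; simp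
      · have : (k:ℝ)^(2-α) = (k:ℝ) * (k:ℝ)^(1-α) := by
          rw [← Real.rpow_one_add' hx (by linarith)]; congr 1; ring
        rw [this]
        have : (k:ℝ)^(1-α) ≤ m^(1-α) :=
          Real.rpow_le_rpow hx (by linarith) (by linarith)
        nlinarith
    have h2 : m^(2-α) = m * m^(1-α) := by
      rw [← Real.rpow_one_add' (by linarith) (by linarith)]; congr 1; ring
    have h1' : (k:ℝ) * m^(1-α) = (m-1) * m^(1-α) := by rw [hxm]
    have he : (m-1) * m^(1-α) = m * m^(1-α) - m^(1-α) := by ring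
    have hd : m^(1-α) ≤ m^(2-α) - (k:ℝ)^(2-α) := by linarith
    have hd0 : 0 ≤ m^(2-α) - (k:ℝ)^(2-α) :=
      le_trans (Real.rpow_nonneg hm0.le _) hd
    calc m^(1-α) ≤ m^(2-α) - (k:ℝ)^(2-α) := hd
      _ ≤ (max 1 (2-α)⁻¹) * (m^(2-α) - (k:ℝ)^(2-α)) := le_mul_of_one_le_left hd0 hc1
  · -- β = 2-α ∈ (0,1)
    have hβ0 : (0:ℝ) < 2 - α := by linarith
    have hβ1 : (2:ℝ) - α ≤ 1 := by linarith
    have hber : (1 + -(1/m))^(2-α) ≤ 1 + (2-α) * (-(1/m)) :=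
      rpow_one_add_le_one_add_mul_self (by
        have : 1/m ≤ 1 := by rw [div_le_one hm0]; exact hm1
        linarith) hβ0.le hβ1
    have hfrac : 1 + -(1/m) = (k:ℝ)/m := by field_simp; linarith
    have hxβ : (k:ℝ)^(2-α) ≤ (1 - (2-α)/m) * m^(2-α) := by
      have h1 : ((k:ℝ)/m)^(2-α) ≤ 1 - (2-α)/m := by
        rw [← hfrac]
        convert hber using 1; ring
      have h2 : ((k:ℝ)/m)^(2-α) = (k:ℝ)^(2-α) / m^(2-α) := Real.div_rpow hx hm0.le _
      have h3 : 0 < m^(2-α) := Real.rpow_pos_of_pos hm0 _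
      rw [h2] at h1
      calc (k:ℝ)^(2-α) = ((k:ℝ)^(2-α) / m^(2-α)) * m^(2-α) := by field_simp
        _ ≤ (1 - (2-α)/m) * m^(2-α) := mul_le_mul_of_nonneg_right h1 h3.le
    have hmβ : m^(2-α) = m^(1-α) * m := by
      rw [← Real.rpow_add_one (by linarith : m ≠ 0)]; congr 1; ring
    have hthis : (1 - (2-α)/m) * m^(2-α) = m^(2-α) - (2-α) * m^(1-α) := by
      rw [hmβ]; field_simp
    have hkey : (2-α) * m^(1-α) ≤ m^(2-α) - (k:ℝ)^(2-α) := by linarith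
    have hpos : 0 < m^(1-α) := Real.rpow_pos_of_pos hm0 _
    have hd0 : 0 ≤ m^(2-α) - (k:ℝ)^(2-α) := le_trans (by positivity) hkey
    have hc2 : (2-α)⁻¹ ≤ max 1 (2-α)⁻¹ := le_max_right _ _
    have h6 : m^(1-α) ≤ (2-α)⁻¹ * (m^(2-α) - (k:ℝ)^(2-α)) := by
      have h5 := mul_le_mul_of_nonneg_left hkey (inv_nonneg.mpr hβ0.le)
      rwa [← mul_assoc, inv_mul_cancel₀ hβ0.ne', one_mul] at h5
    calc m^(1-α) ≤ (2-α)⁻¹ * (m^(2-α) - (k:ℝ)^(2-α)) := h6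
      _ ≤ (max 1 (2-α)⁻¹) * (m^(2-α) - (k:ℝ)^(2-α)) := mul_le_mul_of_nonneg_right hc2 hd0

lemma sum_telescope_le {α : ℝ} (hα1 : 0 < α) (hα2 : α < 2) (N : ℕ) :
    ∑ k ∈ Finset.range N, ((k:ℝ)+1)^(1-α) ≤ (max 1 (2-α)⁻¹) * (N:ℝ)^(2-α) := by
  have h := Finset.sum_range_sub (f := fun n : ℕ => ((n:ℝ))^(2-α)) N
  calc ∑ k ∈ Finset.range N, ((k:ℝ)+1)^(1-α)
      ≤ ∑ k ∈ Finset.range N, (max 1 (2-α)⁻¹) * ((((k+1):ℕ):ℝ)^(2-α) - ((k:ℝ))^(2-α)) :=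
        Finset.sum_le_sum fun k _ => by push_cast; exact telescope_term hα1 hα2 k
    _ = (max 1 (2-α)⁻¹) * ∑ k ∈ Finset.range N, ((((k+1):ℕ):ℝ)^(2-α) - ((k:ℝ))^(2-α)) := by
        rw [← Finset.mul_sum]
    _ = (max 1 (2-α)⁻¹) * ((N:ℝ)^(2-α) - ((0:ℕ):ℝ)^(2-α)) := by rw [h]
    _ = (max 1 (2-α)⁻¹) * (N:ℝ)^(2-α) := by
        norm_num [Real.zero_rpow (by linarith : (2:ℝ)-α ≠ 0)]


lemma shell_zNorm_bounds {d k : ℕ} {z : Fin d → ℤ}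
    (hz : z ∈ ibox d (k+1) \ ibox d k) :
    ((k:ℝ)+1) ≤ zNorm d z ∧ zNorm d z ≤ Real.sqrt d * ((k:ℝ)+1) := by
  obtain ⟨h1, h2⟩ := Finset.mem_sdiff.mp hz
  rw [mem_ibox] at h1
  constructor
  · rw [mem_ibox] at h2
    push_neg at h2
    obtain ⟨i, hi⟩ := h2
    have : (k:ℤ) + 1 ≤ |z i| := hi
    calc ((k:ℝ)+1) ≤ |(z i : ℝ)| := by
          rw [← Int.cast_abs]; exact_mod_cast this
      _ ≤ zNorm d z := coord_le_zNorm d z i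
  · apply zNorm_le d z _ (by positivity)
    intro i
    rw [← Int.cast_abs]
    have := h1 i
    exact_mod_cast this

/-- Bound on a single term inside a shell. -/
lemma rpow_shell_bound {d : ℕ} (hd : 1 ≤ d) {α n M : ℝ} (hα1 : 0 < α)
    (hM : 1 ≤ M) (h1 : M ≤ n) (h2 : n ≤ Real.sqrt d * M) :
    n ^ (2 - (d:ℝ) - α) ≤ (d:ℝ) * M ^ (2 - (d:ℝ) - α) := by
  have hd1 : (1:ℝ) ≤ (d:ℝ) := by exact_mod_cast hd
  have hM0 : (0:ℝ) < M := by linarith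
  have hsd : (1:ℝ) ≤ Real.sqrt d := by
    rw [show (1:ℝ) = Real.sqrt 1 by simp]; exact Real.sqrt_le_sqrt hd1
  rcases le_or_gt 0 (2 - (d:ℝ) - α) with hβ | hβ
  · calc n ^ (2-(d:ℝ)-α) ≤ (Real.sqrt d * M) ^ (2-(d:ℝ)-α) :=
        Real.rpow_le_rpow (by linarith) h2 hβ
      _ = (Real.sqrt d) ^ (2-(d:ℝ)-α) * M ^ (2-(d:ℝ)-α) :=
        Real.mul_rpow (by positivity) hM0.le
      _ ≤ (d:ℝ) * M ^ (2-(d:ℝ)-α) := by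
        have e1 : (Real.sqrt d) ^ (2-(d:ℝ)-α) ≤ (Real.sqrt d) ^ (1:ℝ) :=
          Real.rpow_le_rpow_of_exponent_le hsd (by linarith)
        have e2 : Real.sqrt d ≤ (d:ℝ) := by
          have h := Real.sqrt_le_sqrt (by nlinarith : (d:ℝ) ≤ (d:ℝ)^2)
          rwa [Real.sqrt_sq (by linarith)] at h
        rw [Real.rpow_one] at e1
        have hMβ : (0:ℝ) ≤ M ^ (2-(d:ℝ)-α) := Real.rpow_nonneg hM0.le _
        exact mul_le_mul_of_nonneg_right (e1.trans e2) hMβ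
  · calc n ^ (2-(d:ℝ)-α) ≤ M ^ (2-(d:ℝ)-α) :=
        Real.rpow_le_rpow_of_nonpos hM0 h1 hβ.le
      _ ≤ (d:ℝ) * M ^ (2-(d:ℝ)-α) :=
        le_mul_of_one_le_left (Real.rpow_nonneg hM0.le _) hd1

lemma lattice_sum_le (d : ℕ) (hd : 1 ≤ d) {α : ℝ} (hα1 : 0 < α) (hα2 : α < 2) :
    ∃ c₂ > (0:ℝ), ∀ R : ℝ, 1 ≤ R →
      (∑' z : Fin d → ℤ,
        if 0 < zNorm d z ∧ zNorm d z ≤ R then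
          ENNReal.ofReal ((zNorm d z) ^ (2 - (d:ℝ) - α)) else 0)
      ≤ ENNReal.ofReal (c₂ * R ^ (2-α)) := by
  set c₄ : ℝ := max 1 (2-α)⁻¹ with hc₄
  set c₅ : ℝ := 2 * (d:ℝ)^2 * 3^(d-1) with hc₅
  have hc₄0 : 0 < c₄ := lt_of_lt_of_le one_pos (le_max_left _ _)
  have hc₅0 : 0 < c₅ := by positivity
  refine ⟨c₅ * c₄ * 4, by positivity, ?_⟩
  intro R hR
  set g : (Fin d → ℤ) → ℝ≥0∞ := fun z =>
    if 0 < zNorm d z ∧ zNorm d z ≤ R then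
      ENNReal.ofReal ((zNorm d z) ^ (2 - (d:ℝ) - α)) else 0 with hg
  set N : ℕ := ⌈R⌉₊ with hN
  -- tsum = finite sum over the box
  have hsupp : ∀ z : Fin d → ℤ, z ∉ ibox d N → g z = 0 := by
    intro z hz
    rw [hg]
    simp only
    rw [if_neg]
    rintro ⟨h1, h2⟩
    apply hz
    rw [mem_ibox]
    intro i
    by_contra hcon
    push_neg at hcon
    have : (N:ℝ) + 1 ≤ |(z i : ℝ)| := by
      rw [← Int.cast_abs]
      exact_mod_cast hcon
    have h3 := coord_le_zNorm d z i
    have h4 : R ≤ (N:ℝ) := Nat.le_ceil R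
    linarith
  have htsum : (∑' z : Fin d → ℤ, g z) = ∑ z ∈ ibox d N, g z := tsum_eq_sum hsupp
  -- decompose box into shells
  have hdec : ∀ n : ℕ, ∑ z ∈ ibox d n, g z
      = ∑ z ∈ ibox d 0, g z + ∑ k ∈ Finset.range n, ∑ z ∈ ibox d (k+1) \ ibox d k, g z := by
    intro n
    induction n with
    | zero => simp
    | succ n ih =>
      rw [← Finset.sum_sdiff (ibox_mono (Nat.le_succ n)), ih, Finset.sum_range_succ]
      ring
  -- g vanishes on the central box
  have hg0 : ∑ z ∈ ibox d 0, g z = 0 := by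
    apply Finset.sum_eq_zero
    intro z hz
    rw [mem_ibox] at hz
    have hz0 : ∀ i, z i = 0 := fun i => abs_nonpos_iff.mp (by simpa using hz i)
    rw [hg]
    simp only
    rw [if_neg]
    rintro ⟨h1, -⟩
    simp [zNorm, hz0] at h1
  -- per-shell bound
  have hshell : ∀ k : ℕ, ∑ z ∈ ibox d (k+1) \ ibox d k, g z
      ≤ ENNReal.ofReal (c₅ * ((k:ℝ)+1) ^ (1-α)) := by
    intro k
    have hM1 : (1:ℝ) ≤ (k:ℝ)+1 := by linarith [Nat.cast_nonneg' (α := ℝ) k]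
    have hM0 : (0:ℝ) < (k:ℝ)+1 := by linarith
    have hone : ∀ z ∈ ibox d (k+1) \ ibox d k,
        g z ≤ ENNReal.ofReal ((d:ℝ) * ((k:ℝ)+1) ^ (2-(d:ℝ)-α)) := by
      intro z hz
      obtain ⟨hb1, hb2⟩ := shell_zNorm_bounds hz
      rw [hg]
      simp only
      split_ifs with hcond
      · exact ENNReal.ofReal_le_ofReal (rpow_shell_bound hd hα1 hM1 hb1 hb2)
      · exact zero_le
    calc ∑ z ∈ ibox d (k+1) \ ibox d k, g z
        ≤ (ibox d (k+1) \ ibox d k).card •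
            ENNReal.ofReal ((d:ℝ) * ((k:ℝ)+1) ^ (2-(d:ℝ)-α)) :=
          Finset.sum_le_card_nsmul _ _ _ hone
      _ = ((ibox d (k+1) \ ibox d k).card : ℝ≥0∞) *
            ENNReal.ofReal ((d:ℝ) * ((k:ℝ)+1) ^ (2-(d:ℝ)-α)) := by
          rw [nsmul_eq_mul]
      _ ≤ ENNReal.ofReal (c₅ * ((k:ℝ)+1) ^ (1-α)) := by
          rw [← ENNReal.ofReal_natCast, ← ENNReal.ofReal_mul (Nat.cast_nonneg _)]
          apply ENNReal.ofReal_le_ofReal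
          -- card bound
          have hcard : (ibox d (k+1) \ ibox d k).card ≤ 2 * d * (2*k+3)^(d-1) := by
            rw [Finset.card_sdiff_of_subset (ibox_mono (Nat.le_succ k)), card_ibox, card_ibox]
            have := pow_le_pow_add_aux
              (by omega : 2*k+1 ≤ 2*(k+1)+1) (by omega) d
            have h23 : 2*(k+1)+1 - (2*k+1) = 2 := by omega
            rw [h23] at this
            calc (2*(k+1)+1)^d - (2*k+1)^d ≤ d * 2 * (2*(k+1)+1)^(d-1) := by omega
              _ = 2 * d * (2*k+3)^(d-1) := by ring_nf
          have hcardR : ((ibox d (k+1) \ ibox d k).card : ℝ)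
              ≤ 2 * (d:ℝ) * (3*((k:ℝ)+1))^(d-1) := by
            calc ((ibox d (k+1) \ ibox d k).card : ℝ)
                ≤ ((2 * d * (2*k+3)^(d-1) : ℕ) : ℝ) := by exact_mod_cast hcard
              _ = 2 * (d:ℝ) * ((2*(k:ℝ)+3))^(d-1) := by push_cast; ring
              _ ≤ 2 * (d:ℝ) * (3*((k:ℝ)+1))^(d-1) := by
                  have : (2*(k:ℝ)+3) ≤ 3*((k:ℝ)+1) := by linarith
                  have hd0 : (0:ℝ) ≤ (d:ℝ) := Nat.cast_nonneg d
                  have := pow_le_pow_left₀ (by linarith : (0:ℝ) ≤ 2*(k:ℝ)+3) this (d-1)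
                  nlinarith
          -- rpow algebra
          have hpowM : ((k:ℝ)+1)^(d-1) * ((k:ℝ)+1)^(2-(d:ℝ)-α) = ((k:ℝ)+1)^(1-α) := by
            rw [← Real.rpow_natCast ((k:ℝ)+1) (d-1), ← Real.rpow_add hM0]
            congr 1
            have : ((d-1 : ℕ) : ℝ) = (d:ℝ) - 1 := by
              have := Nat.cast_sub hd (R := ℝ); simpa using this
            rw [this]; ring
          have hrpos : (0:ℝ) ≤ ((k:ℝ)+1)^(2-(d:ℝ)-α) := Real.rpow_nonneg hM0.le _
          calc ((ibox d (k+1) \ ibox d k).card : ℝ) * ((d:ℝ) * ((k:ℝ)+1)^(2-(d:ℝ)-α))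
              ≤ 2 * (d:ℝ) * (3*((k:ℝ)+1))^(d-1) * ((d:ℝ) * ((k:ℝ)+1)^(2-(d:ℝ)-α)) := by
                have hd0 : (0:ℝ) ≤ (d:ℝ) := Nat.cast_nonneg d
                have : (0:ℝ) ≤ (d:ℝ) * ((k:ℝ)+1)^(2-(d:ℝ)-α) := by positivity
                exact mul_le_mul_of_nonneg_right hcardR this
            _ = c₅ * (((k:ℝ)+1)^(d-1) * ((k:ℝ)+1)^(2-(d:ℝ)-α)) := by
                rw [hc₅, mul_pow]; ring
            _ = c₅ * ((k:ℝ)+1)^(1-α) := by rw [hpowM]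
  -- assemble
  rw [htsum, hdec N, hg0, zero_add]
  calc ∑ k ∈ Finset.range N, ∑ z ∈ ibox d (k+1) \ ibox d k, g z
      ≤ ∑ k ∈ Finset.range N, ENNReal.ofReal (c₅ * ((k:ℝ)+1) ^ (1-α)) :=
        Finset.sum_le_sum fun k _ => hshell k
    _ = ENNReal.ofReal (∑ k ∈ Finset.range N, c₅ * ((k:ℝ)+1) ^ (1-α)) := by
        rw [ENNReal.ofReal_sum_of_nonneg]
        intro k _
        positivity
    _ ≤ ENNReal.ofReal (c₅ * c₄ * 4 * R ^ (2-α)) := by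
        apply ENNReal.ofReal_le_ofReal
        rw [← Finset.mul_sum]
        have hts := sum_telescope_le hα1 hα2 N
        have hN2 : (N:ℝ) ≤ 2*R := by
          have h1 : (N:ℝ) < R + 1 := Nat.ceil_lt_add_one (by linarith)
          linarith
        have hN0 : (0:ℝ) ≤ (N:ℝ) := Nat.cast_nonneg N
        have hNpow : (N:ℝ)^(2-α) ≤ 4 * R^(2-α) := by
          calc (N:ℝ)^(2-α) ≤ (2*R)^(2-α) :=
              Real.rpow_le_rpow hN0 hN2 (by linarith)
            _ = 2^(2-α) * R^(2-α) := Real.mul_rpow (by norm_num) (by linarith)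
            _ ≤ 4 * R^(2-α) := by
                have h2 : (2:ℝ)^(2-α) ≤ 2^(2:ℝ) :=
                  Real.rpow_le_rpow_of_exponent_le (by norm_num) (by linarith)
                have h3 : (2:ℝ)^(2:ℝ) = 4 := by
                  rw [show (2:ℝ) = ((2:ℕ):ℝ) by norm_num, Real.rpow_natCast]; norm_num
                have h4 : (0:ℝ) ≤ R^(2-α) := Real.rpow_nonneg (by linarith) _
                nlinarith
        calc c₅ * ∑ k ∈ Finset.range N, ((k:ℝ)+1)^(1-α)
            ≤ c₅ * (c₄ * (N:ℝ)^(2-α)) := by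
              apply mul_le_mul_of_nonneg_left _ hc₅0.le
              exact hts
          _ ≤ c₅ * (c₄ * (4 * R^(2-α))) := by
              have h7 := mul_le_mul_of_nonneg_left hNpow hc₄0.le
              exact mul_le_mul_of_nonneg_left h7 hc₅0.le
          _ = c₅ * c₄ * 4 * R^(2-α) := by ring

lemma norm_latt_sub (d : ℕ) {ρ : ℝ} (hρ : 0 < ρ) (ζ ξ : Fin d → ℤ) :
    ‖latt d ρ ζ - latt d ρ ξ‖ = zNorm d (ζ - ξ) / ρ := by
  rw [EuclideanSpace.norm_eq]
  have h : ∀ i, ‖(latt d ρ ζ - latt d ρ ξ) i‖ ^ 2 = (((ζ - ξ) i : ℤ) : ℝ)^2 / ρ^2 := by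
    intro i
    have : (latt d ρ ζ - latt d ρ ξ) i = ((ζ i : ℝ) - (ξ i : ℝ)) / ρ := by
      simp [latt, sub_div]
    rw [this, Real.norm_eq_abs, sq_abs, div_pow]
    congr 2
    push_cast [Pi.sub_apply]
    ring
  rw [Finset.sum_congr rfl fun i _ => h i, ← Finset.sum_div]
  rw [Real.sqrt_div (by positivity) (ρ^2), Real.sqrt_sq hρ.le]
  rfl

theorem stmt7 (d : ℕ) (hd : 1 ≤ d) (α : ℝ) (hα : α ∈ Set.Ioo (0:ℝ) 2)
    (κ₁ : ℝ) (hκ₁ : 0 < κ₁) :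
    -- c depends only on κ₁, d and α
    ∃ c > (0:ℝ),
      ∀ (C : (Fin d → ℤ) → (Fin d → ℤ) → ℝ),
        (∀ x y, 0 ≤ C x y) →
        -- (A1)
        (∀ x y, C x y = C y x) → (∀ x, C x x = 0) →
        -- (A2)
        (∀ x y, x ≠ y → C x y ≤ κ₁ * zNorm d (x - y) ^ (-((d:ℝ) + α))) →
        ∀ (ρ : ℝ), 1 ≤ ρ → ∀ (lam : ℝ), 1 ≤ lam →
        ∀ (v : EuclideanSpace ℝ (Fin d)), ‖v‖ = 1 →
        ∀ (σ : ℝ), (σ = 1 ∨ σ = -1) →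
        ∀ ξ : Fin d → ℤ,
          (∑' ζ : Fin d → ℤ,
              if 0 < zNorm d (ξ - ζ) / ρ ∧ zNorm d (ξ - ζ) / ρ ≤ lam then
                ENNReal.ofReal
                  ((Real.exp (σ * (inner ℝ v (latt d ρ ζ - latt d ρ ξ) : ℝ)) - 1) ^ 2 *
                    (ρ ^ ((d:ℝ) + α) * C ξ ζ) * ρ ^ (-(d:ℝ)))
              else 0) ≤
            ENNReal.ofReal (c * lam ^ ((4:ℝ) - α) * Real.exp (2 * lam)) := by
  obtain ⟨hα1, hα2⟩ := hα
  obtain ⟨c₂, hc₂0, hlat⟩ := lattice_sum_le d hd hα1 hα2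
  refine ⟨κ₁ * c₂, by positivity, ?_⟩
  intro C hC0 hA1 hA1' hA2 ρ hρ lam hlam v hv σ hσ ξ
  have hρ0 : (0:ℝ) < ρ := by linarith
  set K : ℝ := κ₁ * Real.exp (2*lam) * ρ^(α-2) with hK
  have hK0 : 0 ≤ K := by positivity
  set f : (Fin d → ℤ) → ℝ≥0∞ := fun y =>
    if 0 < zNorm d y ∧ zNorm d y ≤ ρ*lam then
      ENNReal.ofReal (K * zNorm d y ^ (2-(d:ℝ)-α)) else 0 with hf
  -- termwise bound
  have hterm : ∀ ζ : Fin d → ℤ,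
      (if 0 < zNorm d (ξ - ζ) / ρ ∧ zNorm d (ξ - ζ) / ρ ≤ lam then
        ENNReal.ofReal
          ((Real.exp (σ * (inner ℝ v (latt d ρ ζ - latt d ρ ξ) : ℝ)) - 1) ^ 2 *
            (ρ ^ ((d:ℝ) + α) * C ξ ζ) * ρ ^ (-(d:ℝ)))
      else 0) ≤ f (ξ - ζ) := by
    intro ζ
    split_ifs with hcond
    · obtain ⟨hc1, hc2⟩ := hcond
      set n : ℝ := zNorm d (ξ - ζ) with hn_def
      have hn : 0 < n := by
        have he : n = (n/ρ)*ρ := by field_simp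
        rw [he]; exact mul_pos hc1 hρ0
      have hnR : n ≤ ρ * lam := by
        rw [div_le_iff₀ hρ0] at hc2; linarith
      rw [hf]
      simp only
      rw [if_pos ⟨hn, hnR⟩]
      apply ENNReal.ofReal_le_ofReal
      -- real inequality
      have hw : ‖latt d ρ ζ - latt d ρ ξ‖ = n / ρ := by
        rw [norm_latt_sub d hρ0, ← zNorm_sub_comm]
      have habs : |σ * (inner ℝ v (latt d ρ ζ - latt d ρ ξ) : ℝ)| ≤ n/ρ := by
        rw [abs_mul]
        have h1 : |σ| = 1 := by rcases hσ with h | h <;> simp [h]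
        rw [h1, one_mul]
        calc |(inner ℝ v (latt d ρ ζ - latt d ρ ξ) : ℝ)|
            ≤ ‖v‖ * ‖latt d ρ ζ - latt d ρ ξ‖ := abs_real_inner_le_norm _ _
          _ = n/ρ := by rw [hv, hw, one_mul]
      have hE : (Real.exp (σ * (inner ℝ v (latt d ρ ζ - latt d ρ ξ) : ℝ)) - 1)^2
          ≤ (n/ρ)^2 * Real.exp (2*lam) := by
        calc (Real.exp (σ * (inner ℝ v (latt d ρ ζ - latt d ρ ξ) : ℝ)) - 1)^2
            ≤ (n/ρ)^2 * Real.exp (2*(n/ρ)) := exp_sub_one_sq_le habs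
          _ ≤ (n/ρ)^2 * Real.exp (2*lam) :=
              mul_le_mul_of_nonneg_left (Real.exp_le_exp.mpr (by linarith)) (sq_nonneg _)
      have hCb : C ξ ζ ≤ κ₁ * n^(-((d:ℝ)+α)) := hA2 ξ ζ (zNorm_pos_ne hn)
      have hP0 : (0:ℝ) < ρ^((d:ℝ)+α) := Real.rpow_pos_of_pos hρ0 _
      have hQ0 : (0:ℝ) < ρ^(-(d:ℝ)) := Real.rpow_pos_of_pos hρ0 _
      have step1 : (Real.exp (σ * (inner ℝ v (latt d ρ ζ - latt d ρ ξ) : ℝ)) - 1)^2 *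
            (ρ^((d:ℝ)+α) * C ξ ζ) * ρ^(-(d:ℝ))
          ≤ ((n/ρ)^2 * Real.exp (2*lam)) * (ρ^((d:ℝ)+α) * (κ₁ * n^(-((d:ℝ)+α)))) * ρ^(-(d:ℝ)) := by
        apply mul_le_mul_of_nonneg_right _ hQ0.le
        apply mul_le_mul hE (mul_le_mul_of_nonneg_left hCb hP0.le)
          (mul_nonneg hP0.le (hC0 ξ ζ)) (by positivity)
      refine step1.trans (le_of_eq ?_)
      -- rpow algebra
      have hn2 : n^2 * n^(-((d:ℝ)+α)) = n^(2-(d:ℝ)-α) := by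
        rw [← Real.rpow_natCast n 2, ← Real.rpow_add hn]
        congr 1; push_cast; ring
      have hρ2 : ρ^(-(2:ℝ)) * (ρ^((d:ℝ)+α) * ρ^(-(d:ℝ))) = ρ^(α-2) := by
        rw [← Real.rpow_add hρ0, ← Real.rpow_add hρ0]
        congr 1; ring
      have hdiv : (n/ρ)^2 = n^2 * ρ^(-(2:ℝ)) := by
        rw [div_pow, div_eq_mul_inv, Real.rpow_neg hρ0.le]
        congr 1
        rw [← Real.rpow_natCast ρ 2]
        norm_num
      calc ((n/ρ)^2 * Real.exp (2*lam)) * (ρ^((d:ℝ)+α) * (κ₁ * n^(-((d:ℝ)+α)))) * ρ^(-(d:ℝ))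
          = κ₁ * Real.exp (2*lam) * ((n^2 * n^(-((d:ℝ)+α))) *
              (ρ^(-(2:ℝ)) * (ρ^((d:ℝ)+α) * ρ^(-(d:ℝ))))) := by rw [hdiv]; ring
        _ = K * n^(2-(d:ℝ)-α) := by rw [hn2, hρ2, hK]; ring
    · exact zero_le
  refine le_trans (ENNReal.tsum_le_tsum hterm) ?_
  have hshift : ∑' ζ : Fin d → ℤ, f (ξ - ζ) = ∑' y : Fin d → ℤ, f y :=
    (Equiv.subLeft ξ).tsum_eq f
  rw [hshift]
  have hsplit : ∀ y, f y = ENNReal.ofReal K *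
      (if 0 < zNorm d y ∧ zNorm d y ≤ ρ*lam then
        ENNReal.ofReal (zNorm d y ^ (2-(d:ℝ)-α)) else 0) := by
    intro y
    rw [hf]
    simp only
    split_ifs with h
    · rw [← ENNReal.ofReal_mul hK0]
    · rw [mul_zero]
  calc ∑' y, f y
      = ENNReal.ofReal K * ∑' y : Fin d → ℤ,
          (if 0 < zNorm d y ∧ zNorm d y ≤ ρ*lam then
            ENNReal.ofReal (zNorm d y ^ (2-(d:ℝ)-α)) else 0) := by
        rw [← ENNReal.tsum_mul_left]
        exact tsum_congr hsplit
    _ ≤ ENNReal.ofReal K * ENNReal.ofReal (c₂ * (ρ*lam)^(2-α)) := by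
        apply mul_le_mul_right
        exact hlat (ρ*lam) (by nlinarith)
    _ ≤ ENNReal.ofReal (κ₁ * c₂ * lam ^ ((4:ℝ)-α) * Real.exp (2*lam)) := by
        rw [← ENNReal.ofReal_mul hK0]
        apply ENNReal.ofReal_le_ofReal
        have hmul : (ρ*lam)^(2-α) = ρ^(2-α) * lam^(2-α) :=
          Real.mul_rpow hρ0.le (by linarith)
        have hρ1 : ρ^(α-2) * ρ^(2-α) = 1 := by
          rw [← Real.rpow_add hρ0, show α-2+(2-α) = 0 by ring, Real.rpow_zero]
        have hlam2 : lam^(2-α) ≤ lam^((4:ℝ)-α) :=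
          Real.rpow_le_rpow_of_exponent_le hlam (by linarith)
        calc K * (c₂ * (ρ*lam)^(2-α))
            = (κ₁ * c₂ * Real.exp (2*lam)) * ((ρ^(α-2) * ρ^(2-α)) * lam^(2-α)) := by
              rw [hmul, hK]; ring
          _ = (κ₁ * c₂ * Real.exp (2*lam)) * lam^(2-α) := by rw [hρ1, one_mul]
          _ ≤ (κ₁ * c₂ * Real.exp (2*lam)) * lam^((4:ℝ)-α) := by
              apply mul_le_mul_of_nonneg_left hlam2 (by positivity)
          _ = κ₁ * c₂ * lam ^ ((4:ℝ)-α) * Real.exp (2*lam) := by ring
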